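/- For every integer n ≥ 2, every symmetric convex body K ⊂ ℝⁿ and every k ∈ {1, …, n}, one has (Q_k(K))° = R_k(K°), where A° denotes the polar of A. -/

import Mathlib

open Set RealInnerProductSpace

/-- The orthogonal projection of `ℝⁿ` onto the coordinate subspace `span {e_j : j ∈ S}`. -/
noncomputable def coordProj {n : ℕ} (S : Finset (Fin n)) (x : EuclideanSpace ℝ (Fin n)) :
    EuclideanSpace ℝ (Fin n) :=
  WithLp.toLp 2 (fun j => if j ∈ S then x j else 0)

/-- The coordinate subspace `F(S) = span {e_j : j ∈ S}` of `ℝⁿ`, as a set. -/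
noncomputable def coordSubspace {n : ℕ} (S : Finset (Fin n)) :
    Set (EuclideanSpace ℝ (Fin n)) :=
  ↑(Submodule.span ℝ ((fun j => EuclideanSpace.single j (1 : ℝ)) '' (S : Set (Fin n))))

/-- The `k`-convex hull of a set `K ⊆ ℝⁿ`. -/
noncomputable def kConvexHull (n k : ℕ) (K : Set (EuclideanSpace ℝ (Fin n))) :
    Set (EuclideanSpace ℝ (Fin n)) :=
  ⋂ S ∈ {S : Finset (Fin n) | S.card = k}, coordProj S ⁻¹' (coordProj S '' K)

/-- The `k`-cross approximation of a set `K ⊆ ℝⁿ`. -/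
noncomputable def kCross (n k : ℕ) (K : Set (EuclideanSpace ℝ (Fin n))) :
    Set (EuclideanSpace ℝ (Fin n)) :=
  convexHull ℝ (K ∩ ⋃ S ∈ {S : Finset (Fin n) | S.card = k}, coordSubspace S)

/-- The polar of a set `A ⊆ ℝⁿ`. -/
def polarSet {n : ℕ} (A : Set (EuclideanSpace ℝ (Fin n))) : Set (EuclideanSpace ℝ (Fin n)) :=
  {x | ∀ y ∈ A, ⟪x, y⟫ ≤ 1}

variable {n : ℕ}

local notation "E" => EuclideanSpace ℝ (Fin n)

/-- coordProj as a linear map -/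
noncomputable def coordProjL (S : Finset (Fin n)) : E →ₗ[ℝ] E where
  toFun := coordProj S
  map_add' x y := by
    ext j
    simp [coordProj]
    split_ifs <;> simp
  map_smul' c x := by
    ext j
    simp only [coordProj, PiLp.toLp_apply, PiLp.smul_apply, smul_eq_mul, RingHom.id_apply]
    split_ifs <;> simp

lemma coordProj_continuous (S : Finset (Fin n)) : Continuous (coordProj S) :=
  (coordProjL S).continuous_of_finiteDimensional

lemma coordSubspace_eq (S : Finset (Fin n)) :
    coordSubspace S = {x : E | ∀ j ∉ S, x j = 0} := by
  apply Set.Subset.antisymm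
  · intro x hx
    induction hx using Submodule.span_induction with
    | mem y hy =>
      obtain ⟨j, hjS, rfl⟩ := hy
      intro i hiS
      show EuclideanSpace.single j (1:ℝ) i = 0
      rw [EuclideanSpace.single_apply]
      simp only [ite_eq_right_iff]
      intro h; exact absurd (h ▸ hjS) hiS
    | zero => intro i _; rfl
    | add y z _ _ hy hz => intro i hi; show y i + z i = 0; rw [hy i hi, hz i hi, add_zero]
    | smul c y _ hy => intro i hi; show c * y i = 0; rw [hy i hi, mul_zero]
  · intro x hx
    have hxsum : x = ∑ j ∈ S, x j • EuclideanSpace.single j (1 : ℝ) := by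
      ext i
      rw [WithLp.ofLp_sum, Finset.sum_apply]
      simp only [PiLp.smul_apply, EuclideanSpace.single_apply, smul_eq_mul, mul_ite, mul_one,
        mul_zero]
      rw [Finset.sum_ite_eq S i x]
      by_cases hi : i ∈ S
      · simp [hi]
      · simp [hi, hx i hi]
    rw [hxsum]
    exact Submodule.sum_mem _ fun j hj => Submodule.smul_mem _ _
      (Submodule.subset_span ⟨j, hj, rfl⟩)

lemma inner_euclidean (x y : E) : ⟪x, y⟫ = ∑ i, x i * y i := by
  simp [PiLp.inner_apply, RCLike.inner_apply, conj_trivial]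
  exact Finset.sum_congr rfl fun i _ => mul_comm _ _

lemma polarSet_antitone {A B : Set E} (h : A ⊆ B) : polarSet B ⊆ polarSet A :=
  fun _ hx y hy => hx y (h hy)

lemma zero_mem_polarSet (A : Set E) : (0 : E) ∈ polarSet A := by
  intro y _
  simp [inner_zero_left]

lemma polarSet_convex (A : Set E) : Convex ℝ (polarSet A) := by
  intro x hx y hy a b ha hb hab z hz
  have hx' := hx z hz
  have hy' := hy z hz
  calc ⟪a • x + b • y, z⟫ = a * ⟪x, z⟫ + b * ⟪y, z⟫ := by
        rw [inner_add_left, real_inner_smul_left, real_inner_smul_left]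
    _ ≤ a * 1 + b * 1 := by
        gcongr
    _ = 1 := by linarith

lemma polarSet_isClosed (A : Set E) : IsClosed (polarSet A) := by
  have : polarSet A = ⋂ y ∈ A, {x : E | ⟪x, y⟫ ≤ 1} := by
    ext x; simp [polarSet, mem_iInter]
  rw [this]
  exact isClosed_biInter fun y _ =>
    isClosed_le (Continuous.inner continuous_id continuous_const) continuous_const

lemma polarSet_convexHull (A : Set E) : polarSet (convexHull ℝ A) = polarSet A := by
  refine Set.Subset.antisymm (polarSet_antitone (subset_convexHull ℝ A)) ?_
  intro x hx y hy
  have hsub : A ⊆ {y : E | ⟪x, y⟫ ≤ 1} := fun z hz => hx z hz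
  have hconv : Convex ℝ {y : E | ⟪x, y⟫ ≤ 1} := by
    refine convex_halfSpace_le ?_ 1
    exact { map_add := fun a b => inner_add_right x a b
            map_smul := fun c a => real_inner_smul_right x a c }
  exact convexHull_min hsub hconv hy

/-- The bipolar theorem. -/
lemma bipolar {A : Set E} (hcl : IsClosed A) (hconv : Convex ℝ A) (h0 : (0 : E) ∈ A) :
    polarSet (polarSet A) = A := by
  apply Set.Subset.antisymm
  · intro x hx
    by_contra hxA
    obtain ⟨f, u, hfA, hfx⟩ := geometric_hahn_banach_closed_point hconv hcl hxA
    have hu : 0 < u := by simpa using hfA 0 h0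
    set v : E := u⁻¹ • (InnerProductSpace.toDual ℝ E).symm f with hv
    have hvy : ∀ y : E, ⟪v, y⟫ = u⁻¹ * f y := by
      intro y
      rw [hv, real_inner_smul_left, InnerProductSpace.toDual_symm_apply]
    have hvA : v ∈ polarSet A := by
      intro y hy
      rw [hvy y]
      rw [inv_mul_le_iff₀ hu]
      nlinarith [hfA y hy]
    have h1 := hx v hvA
    rw [real_inner_comm, hvy x] at h1
    have : u < u := by
      calc u < f x := hfx
        _ ≤ u := by
          have := (inv_mul_le_iff₀ hu).mp h1
          nlinarith
    exact lt_irrefl _ this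
  · intro a ha y hy
    rw [real_inner_comm]
    exact hy a ha

lemma coordProj_apply (S : Finset (Fin n)) (x : E) (j : Fin n) :
    coordProj S x j = if j ∈ S then x j else 0 := rfl

lemma polarSet_preimage {K : Set E} (h0 : (0 : E) ∈ K) (S : Finset (Fin n)) :
    polarSet (coordProj S ⁻¹' (coordProj S '' K)) = polarSet K ∩ coordSubspace S := by
  apply Set.Subset.antisymm
  · intro x hx
    constructor
    · exact fun y hy => hx y ⟨y, hy, rfl⟩
    · rw [coordSubspace_eq]
      intro j hj
      have key : ∀ t : ℝ, ⟪x, t • EuclideanSpace.single j (1 : ℝ)⟫ ≤ 1 := by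
        intro t
        apply hx
        refine ⟨0, h0, ?_⟩
        ext i
        rw [coordProj_apply, coordProj_apply]
        split_ifs with hi
        · have : i ≠ j := fun h => hj (h ▸ hi)
          simp [EuclideanSpace.single_apply, this]
        · rfl
      have key' : ∀ t : ℝ, t * x j ≤ 1 := by
        intro t
        have := key t
        rw [real_inner_smul_right] at this
        have hxj : ⟪x, EuclideanSpace.single j (1 : ℝ)⟫ = x j := by
          rw [inner_euclidean]
          simp [EuclideanSpace.single_apply]
        rw [hxj] at this
        linarith [this]
      by_contra hne
      rcases lt_or_gt_of_ne hne with h | h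
      · have := key' (2 / x j)
        rw [div_mul_cancel₀ 2 hne] at this
        norm_num at this
      · have := key' (2 / x j)
        rw [div_mul_cancel₀ 2 hne] at this
        norm_num at this
  · rintro x ⟨hxK, hxS⟩ y ⟨z, hzK, hz⟩
    rw [coordSubspace_eq] at hxS
    have : ⟪x, y⟫ = ⟪x, z⟫ := by
      rw [inner_euclidean, inner_euclidean]
      apply Finset.sum_congr rfl
      intro i _
      by_cases hi : i ∈ S
      · have : (coordProj S z) i = (coordProj S y) i := by rw [hz]
        rw [coordProj_apply, coordProj_apply, if_pos hi, if_pos hi] at this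
        rw [this]
      · rw [hxS i hi, zero_mul, zero_mul]
    rw [this]
    exact hxK z hzK

lemma isCompact_convexJoin {s t : Set E} (hs : IsCompact s) (ht : IsCompact t) :
    IsCompact (convexJoin ℝ s t) := by
  have heq : convexJoin ℝ s t =
      (fun p : ℝ × E × E => (1 - p.1) • p.2.1 + p.1 • p.2.2) '' (Icc (0:ℝ) 1 ×ˢ s ×ˢ t) := by
    ext x
    simp only [mem_convexJoin, Set.mem_image, Set.mem_prod, segment_eq_image]
    constructor
    · rintro ⟨a, ha, b, hb, ⟨θ, hθ, rfl⟩⟩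
      exact ⟨⟨θ, a, b⟩, ⟨hθ, ha, hb⟩, rfl⟩
    · rintro ⟨⟨θ, a, b⟩, ⟨hθ, ha, hb⟩, rfl⟩
      exact ⟨a, ha, b, hb, θ, hθ, rfl⟩
  rw [heq]
  apply IsCompact.image
  · exact (isCompact_Icc).prod (hs.prod ht)
  · fun_prop

lemma isCompact_convexHull_biUnion {ι : Type*} [DecidableEq ι] (F : Finset ι)
    (A : ι → Set E) (hconv : ∀ i ∈ F, Convex ℝ (A i)) (hcomp : ∀ i ∈ F, IsCompact (A i))
    (hne : ∀ i ∈ F, (A i).Nonempty) :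
    IsCompact (convexHull ℝ (⋃ i ∈ F, A i)) := by
  induction F using Finset.induction_on with
  | empty => simp
  | @insert a F ha ih =>
    have hconv' : ∀ i ∈ F, Convex ℝ (A i) := fun i hi => hconv i (Finset.mem_insert_of_mem hi)
    have hcomp' : ∀ i ∈ F, IsCompact (A i) := fun i hi => hcomp i (Finset.mem_insert_of_mem hi)
    have hne' : ∀ i ∈ F, (A i).Nonempty := fun i hi => hne i (Finset.mem_insert_of_mem hi)
    have haa : a ∈ insert a F := Finset.mem_insert_self a F
    rw [Finset.set_biUnion_insert]
    rcases F.eq_empty_or_nonempty with rfl | hFne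
    · have he : (⋃ i ∈ (∅ : Finset ι), A i) = ∅ := by simp
      rw [he, Set.union_empty, (hconv a haa).convexHull_eq]
      exact hcomp a haa
    · have hUne : (⋃ i ∈ F, A i).Nonempty := by
        obtain ⟨i, hi⟩ := hFne
        obtain ⟨x, hx⟩ := hne' i hi
        exact ⟨x, Set.mem_biUnion hi hx⟩
      have h1 : convexHull ℝ (A a ∪ ⋃ i ∈ F, A i)
          = convexHull ℝ (A a ∪ convexHull ℝ (⋃ i ∈ F, A i)) :=
        (convexHull_convexHull_union_right _ _).symm
      have h2 : convexHull ℝ (A a ∪ convexHull ℝ (⋃ i ∈ F, A i))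
          = convexJoin ℝ (A a) (convexHull ℝ (⋃ i ∈ F, A i)) :=
        (hconv a haa).convexHull_union (convex_convexHull ℝ _) (hne a haa)
          (hUne.mono (subset_convexHull ℝ _))
      rw [h1, h2]
      exact isCompact_convexJoin (hcomp a haa) (ih hconv' hcomp' hne')

lemma polarSet_isCompact {K : Set E} {ε : ℝ} (hε : 0 < ε) (hball : Metric.ball (0 : E) ε ⊆ K) :
    IsCompact (polarSet K) := by
  apply Metric.isCompact_of_isClosed_isBounded (polarSet_isClosed K)
  rw [Metric.isBounded_iff_subset_closedBall 0]
  refine ⟨2 / ε, fun x hx => ?_⟩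
  rw [Metric.mem_closedBall, dist_zero_right]
  by_cases hx0 : x = 0
  · simp [hx0]; positivity
  · have hxn : 0 < ‖x‖ := norm_pos_iff.mpr hx0
    set y : E := ((ε / 2) * ‖x‖⁻¹) • x with hy
    have hyK : y ∈ K := by
      apply hball
      rw [Metric.mem_ball, dist_zero_right, hy, norm_smul]
      have : ‖(ε / 2) * ‖x‖⁻¹‖ = (ε / 2) * ‖x‖⁻¹ := by
        rw [Real.norm_eq_abs, abs_of_pos (by positivity)]
      rw [this]
      rw [mul_assoc, inv_mul_cancel₀ hxn.ne', mul_one]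
      linarith
    have h1 := hx y hyK
    rw [hy, real_inner_smul_right, real_inner_self_eq_norm_sq] at h1
    have h2 : (ε / 2) * ‖x‖⁻¹ * ‖x‖ ^ 2 = (ε / 2) * ‖x‖ := by
      field_simp
    rw [h2] at h1
    rw [le_div_iff₀ hε]
    nlinarith

lemma polarSet_biUnion {ι : Type*} (T : Set ι) (A : ι → Set E) :
    polarSet (⋃ i ∈ T, A i) = ⋂ i ∈ T, polarSet (A i) := by
  ext x
  simp only [polarSet, mem_setOf_eq, mem_iUnion, mem_iInter]
  constructor
  · intro h i hi y hy
    exact h y ⟨i, hi, hy⟩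
  · rintro h y ⟨i, hi, hy⟩
    exact h i hi y hy


/-- For every `n ≥ 2`, every symmetric convex body `K ⊆ ℝⁿ` and every `k ∈ {1, …, n}`,
`(Q_k(K))° = R_k(K°)`. -/
theorem stmt_5 (n : ℕ) (hn : 2 ≤ n) (K : Set (EuclideanSpace ℝ (Fin n)))
    (hKcomp : IsCompact K) (hKconv : Convex ℝ K) (hKint : (interior K).Nonempty)
    (hKsym : K = -K) (k : ℕ) (hk1 : 1 ≤ k) (hkn : k ≤ n) :
    polarSet (kConvexHull n k K) = kCross n k (polarSet K) := by
  classical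
  -- 0 is in the interior of K
  have h0int : (0 : EuclideanSpace ℝ (Fin n)) ∈ interior K := by
    obtain ⟨x, hx⟩ := hKint
    have hnx : -x ∈ interior K := by
      have h1 : x ∈ interior (-K) := hKsym ▸ hx
      have h2 : (-K : Set (EuclideanSpace ℝ (Fin n)))
          = (Homeomorph.neg (EuclideanSpace ℝ (Fin n))) ⁻¹' K := by
        ext y; simp [Set.mem_neg]
      rw [h2, ← Homeomorph.preimage_interior] at h1
      simpa using h1
    have := hKconv.interior (x := x) (y := -x) hx hnx (le_of_lt one_half_pos)
      (le_of_lt one_half_pos) (by norm_num)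
    simpa using this
  have hK0 : (0 : EuclideanSpace ℝ (Fin n)) ∈ K := interior_subset h0int
  obtain ⟨ε, hε, hball⟩ := Metric.mem_nhds_iff.mp (mem_interior_iff_mem_nhds.mp h0int)
  have hball' : Metric.ball (0 : EuclideanSpace ℝ (Fin n)) ε ⊆ K := hball
  have hPcomp : IsCompact (polarSet K) := polarSet_isCompact hε hball'
  -- pieces
  set A : Finset (Fin n) → Set (EuclideanSpace ℝ (Fin n)) :=
    fun S => polarSet K ∩ coordSubspace S with hA
  set P : Finset (Fin n) → Set (EuclideanSpace ℝ (Fin n)) :=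
    fun S => coordProj S ⁻¹' (coordProj S '' K) with hP
  have hPclosed : ∀ S, IsClosed (P S) := fun S =>
    ((hKcomp.image (coordProj_continuous S)).isClosed).preimage (coordProj_continuous S)
  have hPconvex : ∀ S, Convex ℝ (P S) := by
    intro S
    have himg : Convex ℝ (coordProj S '' K) := by
      have : coordProj S '' K = (coordProjL S) '' K := rfl
      rw [this]
      exact hKconv.linear_image (coordProjL S)
    have : P S = (coordProjL S) ⁻¹' (coordProj S '' K) := rfl
    rw [this]
    exact himg.linear_preimage (coordProjL S)
  have hP0 : ∀ S, (0 : EuclideanSpace ℝ (Fin n)) ∈ P S := fun S => ⟨0, hK0, rfl⟩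
  have hpolarP : ∀ S, polarSet (P S) = A S := fun S => polarSet_preimage hK0 S
  have hApolar : ∀ S, polarSet (A S) = P S := by
    intro S
    rw [← hpolarP S]
    exact bipolar (hPclosed S) (hPconvex S) (hP0 S)
  -- cross approximation as union of pieces
  have hcross : kCross n k (polarSet K)
      = convexHull ℝ (⋃ S ∈ {S : Finset (Fin n) | S.card = k}, A S) := by
    rw [kCross, Set.inter_iUnion₂]
  -- Finset version of the index set
  set F : Finset (Finset (Fin n)) := Finset.univ.filter (fun S => S.card = k) with hF
  have hFidx : ∀ B : Finset (Fin n) → Set (EuclideanSpace ℝ (Fin n)),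
      (⋃ S ∈ {S : Finset (Fin n) | S.card = k}, B S) = ⋃ S ∈ F, B S := by
    intro B
    ext x
    simp [hF]
  -- properties of the pieces
  have hAconv : ∀ S, Convex ℝ (A S) :=
    fun S => (polarSet_convex K).inter (Submodule.span ℝ _).convex
  have hAcomp : ∀ S, IsCompact (A S) := fun S =>
    hPcomp.inter_right (Submodule.closed_of_finiteDimensional _)
  have hA0 : ∀ S, (0 : EuclideanSpace ℝ (Fin n)) ∈ A S :=
    fun S => ⟨zero_mem_polarSet K, (Submodule.span ℝ _).zero_mem⟩
  -- the cross approximation is compact, convex, and contains 0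
  have hCcomp : IsCompact (kCross n k (polarSet K)) := by
    rw [hcross, hFidx A]
    exact isCompact_convexHull_biUnion F A (fun S _ => hAconv S) (fun S _ => hAcomp S)
      (fun S _ => ⟨0, hA0 S⟩)
  have hCconv : Convex ℝ (kCross n k (polarSet K)) := convex_convexHull ℝ _
  have hC0 : (0 : EuclideanSpace ℝ (Fin n)) ∈ kCross n k (polarSet K) := by
    obtain ⟨S₀, _, hS₀⟩ := Finset.exists_subset_card_eq
      (show k ≤ (Finset.univ : Finset (Fin n)).card by simpa using hkn)
    rw [hcross]
    apply subset_convexHull ℝ _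
    exact Set.mem_biUnion (show S₀ ∈ {S : Finset (Fin n) | S.card = k} from hS₀) (hA0 S₀)
  -- polar of the cross approximation is the k-convex hull
  have hkey : polarSet (kCross n k (polarSet K)) = kConvexHull n k K := by
    rw [hcross, polarSet_convexHull, polarSet_biUnion, kConvexHull]
    apply Set.iInter_congr
    intro S
    apply Set.iInter_congr
    intro hS
    exact hApolar S
  -- conclude by the bipolar theorem
  calc polarSet (kConvexHull n k K)
      = polarSet (polarSet (kCross n k (polarSet K))) := by rw [hkey]
    _ = kCross n k (polarSet K) := bipolar hCcomp.isClosed hCconv hC0
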